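/- arXiv:2510.01086 — 4 statements merged into one kernel-verified Lean document; each statement's English description precedes it below -/
import Mathlib

section
/- The polynomial B(x) = 71162 x^9 + 2093958 x^8 + 12614544 x^7 + 27186264 x^6 + 27111294 x^5 + 13439034 x^4 + 3294228 x^3 + 371628 x^2 + 16110 x + 163 is not real-rooted; i.e., it has a complex root that is not real. -/
open Polynomial

/-- The normalized inverse Kazhdan--Lusztig polynomial of the rank-19 counterexample matroid. -/
noncomputable def normalizedQ : Polynomial ℂ :=
  C 71162 * X ^ 9 + C 2093958 * X ^ 8 + C 12614544 * X ^ 7 + C 27186264 * X ^ 6 +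
    C 27111294 * X ^ 5 + C 13439034 * X ^ 4 + C 3294228 * X ^ 3 + C 371628 * X ^ 2 +
    C 16110 * X + C 163

/-- Laguerre's inequality `p(t)·p''(t) ≤ p'(t)²` for real-rooted polynomials, by induction
on the multiset of roots. -/
lemma laguerre_aux (t c : ℝ) (s : Multiset ℝ) :
    eval t (C c * (s.map fun r => X - C r).prod) *
      eval t (derivative (derivative (C c * (s.map fun r => X - C r).prod))) ≤
    eval t (derivative (C c * (s.map fun r => X - C r).prod)) ^ 2 := by
  induction s using Multiset.induction_on with
  | empty => simp
  | cons r s ih =>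
    have hp : C c * ((r ::ₘ s).map fun r => X - C r).prod
        = (X - C r) * (C c * (s.map fun r => X - C r).prod) := by
      rw [Multiset.map_cons, Multiset.prod_cons]; ring
    set q := C c * (s.map fun r => X - C r).prod with hq
    rw [hp]
    have hd : derivative ((X - C r) * q) = q + (X - C r) * derivative q := by
      simp [derivative_mul]
    have hd2 : derivative (q + (X - C r) * derivative q)
        = 2 * derivative q + (X - C r) * derivative (derivative q) := by
      simp [derivative_mul]
      ring
    rw [hd, hd2]
    simp only [eval_add, eval_mul, eval_sub, eval_X, eval_C, eval_ofNat]
    nlinarith [ih, sq_nonneg (eval t q), sq_nonneg ((t - r) * eval t q),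
      sq_nonneg (t - r), mul_self_nonneg (eval t q)]

/-- The polynomial `B(x) = 71162 x^9 + ⋯ + 163` is not real-rooted: it has a complex root
with nonzero imaginary part. -/
theorem normalizedQ_not_real_rooted :
    ∃ z : ℂ, normalizedQ.IsRoot z ∧ z.im ≠ 0 := by
  by_contra h
  push_neg at h
  -- all roots of `normalizedQ` are real
  have hcard : normalizedQ.roots.card = normalizedQ.natDegree :=
    (splits_iff_card_roots).mp (IsAlgClosed.splits _)
  have hlc : normalizedQ.leadingCoeff = 71162 := by
    have h9 : normalizedQ.natDegree = 9 := by
      unfold normalizedQ; compute_degree!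
    rw [leadingCoeff, h9]
    unfold normalizedQ
    simp [coeff_add, coeff_C_mul, coeff_X_pow, coeff_C, coeff_X]
  have hfac := C_leadingCoeff_mul_prod_multiset_X_sub_C hcard
  rw [hlc] at hfac
  set s : Multiset ℝ := normalizedQ.roots.map Complex.re with hs
  set P : ℝ[X] := C 71162 * (s.map fun r => X - C r).prod with hP
  have hmapcong : normalizedQ.roots.map (fun a => X - C a)
      = normalizedQ.roots.map (fun a => (X - C a.re).map Complex.ofRealHom) := by
    refine Multiset.map_congr rfl fun a ha => ?_
    have him : a.im = 0 := h a ((mem_roots (by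
      intro h0
      simp [h0] at hlc)).mp ha)
    have : (a.re : ℂ) = a := by
      apply Complex.ext <;> simp [him]
    rw [Polynomial.map_sub, map_X, map_C]
    simp [this]
  have hmap : normalizedQ = P.map Complex.ofRealHom := by
    rw [hP, Polynomial.map_mul, map_C, Polynomial.map_multiset_prod, ← hfac]
    rw [Multiset.map_map, hs, Multiset.map_map, hmapcong]
    norm_num
  have key := laguerre_aux (-1) 71162 s
  rw [← hP] at key
  have hneg1 : ((-1 : ℂ)) = Complex.ofRealHom (-1 : ℝ) := by norm_num
  have e0 : eval (-1 : ℂ) normalizedQ = ((eval (-1 : ℝ) P : ℝ) : ℂ) := by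
    rw [hmap, hneg1, eval_map, eval₂_at_apply]; rfl
  have e1 : eval (-1 : ℂ) (derivative normalizedQ)
      = ((eval (-1 : ℝ) (derivative P) : ℝ) : ℂ) := by
    rw [hmap, derivative_map, hneg1, eval_map, eval₂_at_apply]; rfl
  have e2 : eval (-1 : ℂ) (derivative (derivative normalizedQ))
      = ((eval (-1 : ℝ) (derivative (derivative P)) : ℝ) : ℂ) := by
    rw [hmap, derivative_map, derivative_map, hneg1, eval_map, eval₂_at_apply]; rfl
  have v0 : eval (-1 : ℂ) normalizedQ = -16291 := by
    simp [normalizedQ]; norm_num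
  have v1 : eval (-1 : ℂ) (derivative normalizedQ) = 28890 := by
    simp [normalizedQ, derivative_add, derivative_C_mul, derivative_X_pow]; norm_num
  have v2 : eval (-1 : ℂ) (derivative (derivative normalizedQ)) = -2064528 := by
    simp [normalizedQ, derivative_add, derivative_C_mul, derivative_X_pow]; norm_num
  have r0 : eval (-1 : ℝ) P = -16291 := by
    have := e0.symm.trans v0; exact_mod_cast this
  have r1 : eval (-1 : ℝ) (derivative P) = 28890 := by
    have := e1.symm.trans v1; exact_mod_cast this
  have r2 : eval (-1 : ℝ) (derivative (derivative P)) = -2064528 := by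
    have := e2.symm.trans v2; exact_mod_cast this
  rw [r0, r1, r2] at key
  norm_num at key
end

section
/- For the uniform matroid U_{k,n} with 0 < k < n, the closed formula Q_{U_{k,n}}(x) = binom(n,k) · Σ_{j=0}^{⌊(k-1)/2⌋} [(n-k)(k-2j) / ((n-k+j)(n-j))] · binom(k,j) · x^j satisfies the recursion Q_{U_{k,n}}(x) = Q_{U_{k,n-1}}(x) + (1+x)·Q_{U_{k-1,n-1}}(x) − τ_{k-1,n-1}·x^{k/2}, where τ_{k-1,n-1} = binom(n-1,k-1)·binom(k-1,⌊(k-2)/2⌋)·4(n-k)/((2n-k-2)(2n-k)) if k−1 is odd and 0 if k−1 is even, for all 1 < k < n. -/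
set_option maxHeartbeats 1000000

open Polynomial

/-- The closed formula of Gao–Xie for the inverse Kazhdan–Lusztig polynomial of the
uniform matroid `U_{k,n}` (for `0 < k < n`), together with `Q = 1` for Boolean matroids
(`k = 0` or `k = n`). -/
noncomputable def Quniform (k n : ℕ) : Polynomial ℚ :=
  if 0 < k ∧ k < n then
    C (n.choose k : ℚ) * ∑ j ∈ Finset.range ((k - 1) / 2 + 1),
      C ((((n : ℚ) - k) * ((k : ℚ) - 2 * j)) / (((n : ℚ) - k + j) * ((n : ℚ) - j))
          * (k.choose j : ℚ)) * X ^ j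
  else 1

/-- The quantity `τ_{k-1,n-1}` appearing in the deletion recursion for uniform matroids. -/
noncomputable def tauDel (k n : ℕ) : ℚ :=
  if Odd (k - 1) then
    ((n - 1).choose (k - 1) : ℚ) * ((k - 1).choose ((k - 2) / 2) : ℚ) * 4 * ((n : ℚ) - k)
      / ((2 * (n : ℚ) - k - 2) * (2 * (n : ℚ) - k))
  else 0

noncomputable def qc (k n j : ℕ) : ℚ :=
  (((n : ℚ) - k) * ((k : ℚ) - 2 * j)) / (((n : ℚ) - k + j) * ((n : ℚ) - j)) * (k.choose j : ℚ)

lemma coeff_CsumX (a : ℚ) (R : ℕ) (f : ℕ → ℚ) (d : ℕ) :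
    (C a * ∑ j ∈ Finset.range R, C (f j) * X ^ j).coeff d
      = if d < R then a * f d else 0 := by
  rw [coeff_C_mul, finset_sum_coeff]
  simp only [coeff_C_mul, coeff_X_pow, mul_ite, mul_one, mul_zero]
  rw [Finset.sum_ite_eq (Finset.range R) d f]
  simp [Finset.mem_range]

lemma coeff_one_add_X_mul (p : Polynomial ℚ) (d : ℕ) :
    ((1 + X) * p).coeff d = p.coeff d + (if d = 0 then 0 else p.coeff (d - 1)) := by
  rcases d with _ | e
  · simp [add_mul, Polynomial.mul_coeff_zero]
  · simp [add_mul, Polynomial.coeff_X_mul]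

lemma coeff_Quniform (k n : ℕ) (h1 : 0 < k) (h2 : k < n) (d : ℕ) :
    (Quniform k n).coeff d = if d < (k - 1) / 2 + 1 then (n.choose k : ℚ) * qc k n d else 0 := by
  rw [Quniform, if_pos ⟨h1, h2⟩, coeff_CsumX]
  rfl

lemma core (a b c : ℚ) (h1 : a - b + c ≠ 0) (h2 : a - c ≠ 0)
    (h3 : a - 1 - b + c ≠ 0) (h4 : a - 1 - c ≠ 0) (h5 : a - b + c - 1 ≠ 0) :
    (b - 2 * c) * a / ((a - b + c) * (a - c))
      = (a - 1 - b) * (b - 2 * c) / ((a - 1 - b + c) * (a - 1 - c))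
        + (b - c) * (b - 1 - 2 * c) / ((a - b + c) * (a - 1 - c))
        + c * (b + 1 - 2 * c) / ((a - b + c - 1) * (a - c)) := by
  field_simp
  ring

lemma main1 (n k j : ℕ) (hkn : k < n) (hjk : j < k) (hj : 1 ≤ j) :
    (n.choose k : ℚ) * qc k n j
      = ((n - 1).choose k : ℚ) * qc k (n - 1) j
        + ((n - 1).choose (k - 1) : ℚ) * qc (k - 1) (n - 1) j
        + ((n - 1).choose (k - 1) : ℚ) * qc (k - 1) (n - 1) (j - 1) := by
  obtain ⟨N, rfl⟩ : ∃ N, n = N + 1 := ⟨n - 1, by omega⟩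
  obtain ⟨K, rfl⟩ : ∃ K, k = K + 1 := ⟨k - 1, by omega⟩
  obtain ⟨J, rfl⟩ : ∃ J, j = J + 1 := ⟨j - 1, by omega⟩
  simp only [Nat.add_sub_cancel]
  have hKN : K + 1 ≤ N := by omega
  have hJK : J + 1 ≤ K := by omega
  set a : ℚ := (N : ℚ) + 1 with ha
  set b : ℚ := (K : ℚ) + 1 with hb
  set c : ℚ := (J : ℚ) + 1 with hc
  have cKN : b ≤ (N : ℚ) := by rw [hb]; exact_mod_cast hKN
  have cJK : c ≤ (K : ℚ) := by rw [hc]; exact_mod_cast hJK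
  have hN0 : (0:ℚ) ≤ (N : ℚ) := Nat.cast_nonneg N
  have hK0 : (0:ℚ) ≤ (K : ℚ) := Nat.cast_nonneg K
  have hJ0 : (0:ℚ) ≤ (J : ℚ) := Nat.cast_nonneg J
  have ha0 : a ≠ 0 := by rw [ha]; positivity
  have hb0 : b ≠ 0 := by rw [hb]; positivity
  have h1 : a - b + c ≠ 0 := by intro h; rw [ha, hb, hc] at h; nlinarith
  have h2 : a - c ≠ 0 := by intro h; rw [ha, hc] at h; nlinarith
  have h3 : a - 1 - b + c ≠ 0 := by intro h; rw [ha, hb, hc] at h; nlinarith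
  have h4 : a - 1 - c ≠ 0 := by intro h; rw [ha, hc] at h; nlinarith
  have h5 : a - b + c - 1 ≠ 0 := by intro h; rw [ha, hb, hc] at h; nlinarith
  set cn : ℚ := ((N + 1).choose (K + 1) : ℚ) with hcn
  set ck : ℚ := ((K + 1).choose (J + 1) : ℚ) with hck
  have e1 : (N.choose K : ℚ) * a = cn * b := by
    rw [ha, hb, hcn]
    have h := Nat.add_one_mul_choose_eq N K
    have h' : ((N + 1) * N.choose K : ℚ) = ((N + 1).choose (K + 1) * (K + 1) : ℚ) := by
      exact_mod_cast congrArg (Nat.cast (R := ℚ)) h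
    push_cast at h' ⊢
    linarith [h']
  have e3 : (K.choose J : ℚ) * b = ck * c := by
    rw [hb, hc, hck]
    have h := Nat.add_one_mul_choose_eq K J
    have h' : ((K + 1) * K.choose J : ℚ) = ((K + 1).choose (J + 1) * (J + 1) : ℚ) := by
      exact_mod_cast congrArg (Nat.cast (R := ℚ)) h
    push_cast at h' ⊢
    linarith [h']
  have e2 : (N.choose (K + 1) : ℚ) = cn - (N.choose K : ℚ) := by
    rw [hcn]; push_cast [Nat.choose_succ_succ' N K]; ring
  have e4 : (K.choose (J + 1) : ℚ) = ck - (K.choose J : ℚ) := by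
    rw [hck]; push_cast [Nat.choose_succ_succ' K J]; ring
  have eNK : (N.choose K : ℚ) = cn * b / a := by
    rw [eq_div_iff ha0]; exact e1
  have eKJ : (K.choose J : ℚ) = ck * c / b := by
    rw [eq_div_iff hb0]; exact e3
  have hcore := core a b c h1 h2 h3 h4 h5
  set w : ℚ := cn * ck * (a - b) / a with hw
  have tL : cn * qc (K + 1) (N + 1) (J + 1)
      = w * ((b - 2 * c) * a / ((a - b + c) * (a - c))) := by
    rw [hw]; unfold qc; push_cast
    rw [← ha, ← hb, ← hc, ← hck]
    field_simp
  have tB : ((N).choose (K + 1) : ℚ) * qc (K + 1) N (J + 1)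
      = w * ((a - 1 - b) * (b - 2 * c) / ((a - 1 - b + c) * (a - 1 - c))) := by
    rw [hw, e2, eNK]; unfold qc; push_cast
    have hNa : (N : ℚ) = a - 1 := by rw [ha]; ring
    rw [hNa, ← hb, ← hc, ← hck]
    field_simp
  have tD1 : ((N).choose K : ℚ) * qc K N (J + 1)
      = w * ((b - c) * (b - 1 - 2 * c) / ((a - b + c) * (a - 1 - c))) := by
    rw [hw]; unfold qc; push_cast
    have hNa : (N : ℚ) = a - 1 := by rw [ha]; ring
    have hKb : (K : ℚ) = b - 1 := by rw [hb]; ring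
    rw [e4, eNK, eKJ, hNa, hKb, ← hc]
    rw [show a - 1 - (b - 1) + c = a - b + c by ring, show a - 1 - (b - 1) = a - b by ring]
    field_simp
  have tD2 : ((N).choose K : ℚ) * qc K N J
      = w * (c * (b + 1 - 2 * c) / ((a - b + c - 1) * (a - c))) := by
    have hq : qc K N J
        = ((a - b) * (b + 1 - 2 * c)) / ((a - b + c - 1) * (a - c)) * (K.choose J : ℚ) := by
      unfold qc
      rw [show ((N : ℚ) - K + J) = a - b + c - 1 from by rw [ha, hb, hc]; ring,
        show ((N : ℚ) - J) = a - c from by rw [ha, hc]; ring,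
        show ((N : ℚ) - K) = a - b from by rw [ha, hb]; ring,
        show ((K : ℚ) - 2 * J) = b + 1 - 2 * c from by rw [hb, hc]; ring]
    rw [hq, hw, eNK, eKJ]
    field_simp
  rw [tL, tB, tD1, tD2, hcore]
  ring

lemma main0 (n k : ℕ) (hk : 1 ≤ k) (hkn : k + 1 < n) :
    (n.choose k : ℚ) * qc k n 0
      = ((n - 1).choose k : ℚ) * qc k (n - 1) 0
        + ((n - 1).choose (k - 1) : ℚ) * qc (k - 1) (n - 1) 0 := by
  obtain ⟨N, rfl⟩ : ∃ N, n = N + 1 := ⟨n - 1, by omega⟩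
  obtain ⟨K, rfl⟩ : ∃ K, k = K + 1 := ⟨k - 1, by omega⟩
  simp only [Nat.add_sub_cancel]
  have hKN : K + 2 ≤ N := by omega
  have cKN : (K : ℚ) + 2 ≤ (N : ℚ) := by exact_mod_cast hKN
  have e1 : (N.choose K : ℚ) * ((N : ℚ) + 1) = ((N + 1).choose (K + 1) : ℚ) * ((K : ℚ) + 1) := by
    have h := Nat.add_one_mul_choose_eq N K
    have h' : ((N + 1) * N.choose K : ℚ) = ((N + 1).choose (K + 1) * (K + 1) : ℚ) := by
      exact_mod_cast congrArg (Nat.cast (R := ℚ)) h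
    push_cast at h' ⊢; linarith [h']
  have e2 : (N.choose (K + 1) : ℚ) = ((N + 1).choose (K + 1) : ℚ) - (N.choose K : ℚ) := by
    push_cast [Nat.choose_succ_succ' N K]; ring
  have hN1 : ((N : ℚ) + 1) ≠ 0 := by positivity
  have hN0 : (N : ℚ) ≠ 0 := by intro h; nlinarith [Nat.cast_nonneg (α := ℚ) K]
  have d1 : ((N : ℚ) + 1) - ((K : ℚ) + 1) ≠ 0 := by intro h; nlinarith
  have d2 : (N : ℚ) - ((K : ℚ) + 1) ≠ 0 := by intro h; nlinarith
  have d3 : (N : ℚ) - (K : ℚ) ≠ 0 := by intro h; nlinarith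
  have eNK : (N.choose K : ℚ) = ((N + 1).choose (K + 1) : ℚ) * ((K : ℚ) + 1) / ((N : ℚ) + 1) := by
    rw [eq_div_iff hN1]; exact e1
  unfold qc
  push_cast
  rw [e2, eNK]
  simp only [add_zero, sub_zero, mul_zero, Nat.choose_zero_right, Nat.cast_one, mul_one]
  field_simp
  ring

lemma main0' (k : ℕ) (hk : 1 ≤ k) :
    ((k + 1).choose k : ℚ) * qc k (k + 1) 0
      = 1 + ((k + 1 - 1).choose (k - 1) : ℚ) * qc (k - 1) (k + 1 - 1) 0 := by
  obtain ⟨K, rfl⟩ : ∃ K, k = K + 1 := ⟨k - 1, by omega⟩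
  simp only [Nat.add_sub_cancel]
  have h1 : ((K + 2).choose (K + 1)) = K + 2 := by
    rw [Nat.choose_succ_self_right]
  have h2 : ((K + 1).choose K) = K + 1 := Nat.choose_succ_self_right K
  unfold qc
  rw [show K + 1 + 1 = K + 2 from rfl, h1, h2]
  push_cast
  have hK1 : ((K : ℚ) + 1) ≠ 0 := by positivity
  have hK2 : ((K : ℚ) + 2) ≠ 0 := by positivity
  simp only [Nat.choose_zero_right, Nat.cast_one, Nat.cast_zero]
  field_simp
  ring

lemma tau_eq (n m : ℕ) (hm : 1 ≤ m) (hn : 2 * m < n) :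
    tauDel (2 * m) n = ((n - 1).choose (2 * m - 1) : ℚ) * qc (2 * m - 1) (n - 1) (m - 1) := by
  obtain ⟨N, rfl⟩ : ∃ N, n = N + 1 := ⟨n - 1, by omega⟩
  obtain ⟨M, rfl⟩ : ∃ M, m = M + 1 := ⟨m - 1, by omega⟩
  simp only [Nat.add_sub_cancel]
  have h1 : 2 * (M + 1) - 1 = 2 * M + 1 := by omega
  have h2 : (2 * (M + 1) - 2) / 2 = M := by omega
  have hodd : Odd (2 * (M + 1) - 1) := by rw [h1]; exact ⟨M, by ring⟩
  rw [tauDel, if_pos hodd, h1, h2]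
  unfold qc
  have hNM : 2 * M + 2 ≤ N := by omega
  have cNM : 2 * (M : ℚ) + 2 ≤ (N : ℚ) := by exact_mod_cast hNM
  push_cast
  have d1 : 2 * ((N : ℚ) + 1) - 2 * ((M : ℚ) + 1) - 2 ≠ 0 := by intro h; nlinarith
  have d2 : 2 * ((N : ℚ) + 1) - 2 * ((M : ℚ) + 1) ≠ 0 := by intro h; nlinarith
  have d3 : (N : ℚ) - (2 * M + 1) + M ≠ 0 := by intro h; nlinarith
  have d4 : (N : ℚ) - M ≠ 0 := by intro h; nlinarith
  rw [div_eq_iff (mul_ne_zero d1 d2)]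
  field_simp
  ring

lemma qc_half (n m : ℕ) : qc (2 * m) n m = 0 := by
  unfold qc
  push_cast
  rw [show (2 * (m : ℚ) - 2 * m) = 0 from by ring]
  simp

lemma qc_self (k j : ℕ) : qc k k j = 0 := by
  unfold qc
  simp [sub_self]

/-- The inverse Kazhdan–Lusztig deletion recursion for uniform matroids:
`Q_{U_{k,n}}(x) = Q_{U_{k,n-1}}(x) + (1+x)·Q_{U_{k-1,n-1}}(x) − τ_{k-1,n-1}·x^{k/2}`
for all `1 < k < n`. -/
theorem Quniform_deletion_recursion (k n : ℕ) (hk : 1 < k) (hn : k < n) :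
    Quniform k n =
      Quniform k (n - 1) + (1 + X) * Quniform (k - 1) (n - 1)
        - C (tauDel k n) * X ^ (k / 2) := by
  have h1k : 0 < k := by omega
  have h1k' : 0 < k - 1 := by omega
  have hkn' : k - 1 < n - 1 := by omega
  rcases Nat.lt_or_ge k (n - 1) with hlt | hge
  · -- k < n - 1
    ext d
    rw [coeff_sub, coeff_add, coeff_one_add_X_mul, coeff_C_mul, coeff_X_pow,
      coeff_Quniform k n h1k hn d, coeff_Quniform k (n - 1) h1k hlt d,
      coeff_Quniform (k - 1) (n - 1) h1k' hkn' d, coeff_Quniform (k - 1) (n - 1) h1k' hkn' (d - 1)]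
    simp only [mul_ite, mul_one, mul_zero]
    rcases Nat.even_or_odd k with ⟨m, hm⟩ | ⟨m, hm⟩
    · -- k even
      have hm1 : 1 ≤ m := by omega
      have htau := tau_eq n m hm1 (by omega)
      rw [show 2 * m = k from by omega] at htau
      rw [htau]
      split_ifs <;> try (exfalso; omega)
      · -- d = 0
        have hd : d = 0 := by omega
        subst hd
        rw [main0 n k (by omega) (by omega)]
        ring
      · -- 1 ≤ d ≤ m - 1
        rw [main1 n k d hn (by omega) (by omega)]
        ring
      · -- d = m
        rw [show d - 1 = m - 1 from by omega]
        ring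
      · ring
    · -- k odd
      have hm1 : 1 ≤ m := by omega
      have htau : tauDel k n = 0 := by
        rw [tauDel, if_neg]
        rw [show k - 1 = 2 * m from by omega]
        exact Nat.not_odd_iff_even.mpr ⟨m, two_mul m⟩
      rw [htau]
      split_ifs <;> try (exfalso; omega)
      · have hd : d = 0 := by omega
        subst hd
        rw [main0 n k (by omega) (by omega)]
        ring
      · rw [main1 n k d hn (by omega) (by omega)]
        ring
      · have hz : qc (k - 1) (n - 1) d = 0 := by
          rw [show k - 1 = 2 * m from by omega, show d = m from by omega]
          exact qc_half (n - 1) m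
        rw [main1 n k d hn (by omega) (by omega), hz]
        ring
      · ring
  · -- k = n - 1
    have hn1 : n = k + 1 := by omega
    subst hn1
    simp only [Nat.add_sub_cancel] at *
    have hQ1 : Quniform k k = 1 := by rw [Quniform, if_neg (by omega)]
    rw [hQ1]
    ext d
    rw [coeff_sub, coeff_add, coeff_one_add_X_mul, coeff_C_mul, coeff_X_pow,
      coeff_Quniform k (k + 1) h1k (by omega) d, coeff_one,
      coeff_Quniform (k - 1) k h1k' (by omega) d, coeff_Quniform (k - 1) k h1k' (by omega) (d - 1)]
    simp only [mul_ite, mul_one, mul_zero]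
    rcases Nat.even_or_odd k with ⟨m, hm⟩ | ⟨m, hm⟩
    · have hm1 : 1 ≤ m := by omega
      have htau := tau_eq (k + 1) m hm1 (by omega)
      rw [show 2 * m = k from by omega] at htau
      rw [htau]
      split_ifs <;> try (exfalso; omega)
      · have hd : d = 0 := by omega
        subst hd
        rw [main0' k (by omega)]
        simp only [Nat.add_sub_cancel]
        ring
      · rw [main1 (k + 1) k d (by omega) (by omega) (by omega)]
        simp only [Nat.add_sub_cancel, qc_self]
        ring
      · simp only [Nat.add_sub_cancel]
        rw [show d - 1 = m - 1 from by omega]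
        ring
      · ring
    · have hm1 : 1 ≤ m := by omega
      have htau : tauDel k (k + 1) = 0 := by
        rw [tauDel, if_neg]
        rw [show k - 1 = 2 * m from by omega]
        exact Nat.not_odd_iff_even.mpr ⟨m, two_mul m⟩
      rw [htau]
      split_ifs <;> try (exfalso; omega)
      · have hd : d = 0 := by omega
        subst hd
        rw [main0' k (by omega)]
        simp only [Nat.add_sub_cancel]
        ring
      · rw [main1 (k + 1) k d (by omega) (by omega) (by omega)]
        simp only [Nat.add_sub_cancel, qc_self]
        ring
      · have hz : qc (k - 1) k d = 0 := by
          rw [show k - 1 = 2 * m from by omega, show d = m from by omega]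
          exact qc_half k m
        rw [main1 (k + 1) k d (by omega) (by omega) (by omega)]
        simp only [Nat.add_sub_cancel]
        rw [hz, qc_self]
        ring
      · ring
end

section
/- For 0 < k < n, define Y_{k,n}(x) as the explicit binomial sum Y_{k,n}(x) = Σ_{i=0}^{⌊k/2⌋} binom(n,i)·binom(n-i-1,n-k)·x^i + Σ_{i=0}^{⌊(k-1)/2⌋} binom(n,i)·binom(n-i-1,n-k)·x^{k-i}, and set Y_{n,n}(x) = (1+x)^n. Then for 1 < k < n the recursion Y_{k,n}(x) = Y_{k,n-1}(x) + (1+x)·Y_{k-1,n-1}(x) − τ_{k-1,n-1}·x^{k/2} holds, where τ_{k-1,n-1} = binom(n-1,k-1)·binom(k-1,⌊(k-2)/2⌋)·4(n-k)/((2n-k-2)(2n-k)) if k−1 is odd and 0 otherwise. -/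
open Polynomial
open Nat
set_option maxHeartbeats 1000000

/-- The inverse `Z`-polynomial of the uniform matroid `U_{k,n}`: the explicit binomial sum
of Gao–Ruan–Xie for `k < n`, and `(1+x)^n` for the Boolean matroid `U_{n,n}`. -/
noncomputable def Yuniform (k n : ℕ) : Polynomial ℚ :=
  if k < n then
    (∑ i ∈ Finset.range (k / 2 + 1),
        C ((n.choose i : ℚ) * ((n - i - 1).choose (n - k) : ℚ)) * X ^ i) +
    ∑ i ∈ Finset.range ((k - 1) / 2 + 1),
        C ((n.choose i : ℚ) * ((n - i - 1).choose (n - k) : ℚ)) * X ^ (k - i)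
  else (1 + X) ^ n

noncomputable def cY (k n j : ℕ) : ℚ :=
  (if j ≤ k / 2 then (n.choose j : ℚ) * ((n - j - 1).choose (n - k) : ℚ) else 0) +
  (if k - (k - 1) / 2 ≤ j ∧ j ≤ k then
      (n.choose (k - j) : ℚ) * ((n - (k - j) - 1).choose (n - k) : ℚ) else 0)


lemma coeff_Yuniform (k n : ℕ) (hk : 0 < k) (hkn : k ≤ n) (j : ℕ) :
    (Yuniform k n).coeff j = cY k n j := by
  rcases lt_or_eq_of_le hkn with h | h
  · rw [Yuniform, if_pos h, coeff_add]
    congr 1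
    · rw [finset_sum_coeff]
      simp only [coeff_C_mul, coeff_X_pow, mul_ite, mul_one, mul_zero]
      rw [Finset.sum_ite_eq (Finset.range (k / 2 + 1)) j]
      simp only [Finset.mem_range]
      split_ifs with h1 h2 h2 <;> first | rfl | omega
    · rw [finset_sum_coeff]
      simp only [coeff_C_mul, coeff_X_pow, mul_ite, mul_one, mul_zero]
      by_cases hc : k - (k - 1) / 2 ≤ j ∧ j ≤ k
      · rw [if_pos hc,
          show (∑ i ∈ Finset.range ((k-1)/2 + 1),
              if j = k - i then (n.choose i : ℚ) * ((n - i - 1).choose (n - k) : ℚ) else 0)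
            = ∑ i ∈ Finset.range ((k-1)/2 + 1),
              if k - j = i then (n.choose i : ℚ) * ((n - i - 1).choose (n - k) : ℚ) else 0
            from Finset.sum_congr rfl (fun i hi => by
              simp only [Finset.mem_range] at hi
              congr 1
              simp only [eq_iff_iff]
              omega)]
        rw [Finset.sum_ite_eq (Finset.range ((k-1)/2 + 1)) (k - j)]
        rw [if_pos (by simp only [Finset.mem_range]; omega)]
      · rw [if_neg hc]
        apply Finset.sum_eq_zero
        intro i hi
        simp only [Finset.mem_range] at hi
        rw [if_neg (by omega)]
  · subst h
    rw [Yuniform, if_neg (lt_irrefl k), coeff_one_add_X_pow]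
    rw [cY]
    simp only [Nat.sub_self, Nat.choose_zero_right, Nat.cast_one, mul_one]
    by_cases hj : j ≤ k
    · rcases le_or_gt j (k / 2) with h1 | h1
      · rw [if_pos h1, if_neg (by omega)]
        ring
      · rw [if_neg (by omega), if_pos (by omega)]
        rw [Nat.choose_symm hj]
        ring
    · rw [if_neg (by omega), if_neg (by omega), Nat.choose_eq_zero_of_lt (by omega)]
      simp

lemma pascal1 (t a : ℕ) : (((t+1).choose (a+1) : ℕ) : ℚ) = (t.choose a) + (t.choose (a+1)) := by
  rw [Nat.choose_succ_succ]; push_cast; ring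

lemma pascal2 (j s a : ℕ) :
    (((j+s+3).choose (j+1) : ℕ) : ℚ) * ((s+1).choose (a+1))
      = ((j+s+2).choose (j+1)) * (s.choose a)
        + ((j+s+2).choose (j+1)) * (s.choose (a+1))
        + ((j+s+2).choose j) * ((s+1).choose (a+1)) := by
  rw [show j+s+3 = (j+s+2)+1 from rfl, Nat.choose_succ_succ ((j+s+2)) j,
      Nat.choose_succ_succ s a]
  push_cast; ring

lemma pascal2' (n i a : ℕ) (h1 : 1 ≤ i) (h2 : i + 2 ≤ n) :
    (n.choose i : ℚ) * ((n - i - 1).choose (a+1))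
      = ((n-1).choose i) * ((n - i - 2).choose a)
        + ((n-1).choose i) * ((n - i - 2).choose (a+1))
        + ((n-1).choose (i-1)) * ((n - i - 1).choose (a+1)) := by
  obtain ⟨j, rfl⟩ : ∃ j, i = j + 1 := ⟨i - 1, by omega⟩
  obtain ⟨s, rfl⟩ : ∃ s, n = j + s + 3 := ⟨n - j - 3, by omega⟩
  rw [show j + s + 3 - (j+1) - 1 = s + 1 from by omega,
      show j + s + 3 - (j+1) - 2 = s from by omega,
      show j + s + 3 - 1 = j + s + 2 from by omega,
      show j + 1 - 1 = j from by omega]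
  exact pascal2 j s a

lemma choose_eq_factorial_div (n k : ℕ) (h : k ≤ n) :
    (n.choose k : ℚ) = n ! / (k ! * (n - k)!) := Nat.cast_choose ℚ h

lemma middle (b c : ℕ) :
    ((2*b+c+3).choose (b+1) : ℚ) * ((b+c+1).choose (c+1))
      = ((2*b+c+2).choose (b+1)) * ((b+c).choose c)
        + 2 * ((2*b+c+2).choose b) * ((b+c+1).choose (c+1))
        - ((2*b+c+2).choose (2*b+1)) * ((2*b+1).choose b) * (c+1)
            / ((b+c+1)*(b+c+2)) := by
  rw [choose_eq_factorial_div _ _ (by omega), choose_eq_factorial_div _ _ (by omega),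
      choose_eq_factorial_div _ _ (by omega), choose_eq_factorial_div _ _ (by omega),
      choose_eq_factorial_div _ _ (by omega), choose_eq_factorial_div _ _ (by omega),
      choose_eq_factorial_div _ _ (by omega)]
  have e1 : 2*b+c+3 - (b+1) = b+c+2 := by omega
  have e2 : b+c+1 - (c+1) = b := by omega
  have e3 : 2*b+c+2 - (b+1) = b+c+1 := by omega
  have e4 : b+c - c = b := by omega
  have e5 : 2*b+c+2 - b = b+c+2 := by omega
  have e6 : 2*b+c+2 - (2*b+1) = c+1 := by omega
  have e7 : 2*b+1 - b = b+1 := by omega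
  rw [e1, e2, e3, e4, e5, e6, e7]
  have f1 : ((2*b+c+3)! : ℚ) = (2*b+c+3) * (2*b+c+2)! := by
    rw [show 2*b+c+3 = (2*b+c+2)+1 from rfl, Nat.factorial_succ]; push_cast; ring
  have f2 : ((b+c+2)! : ℚ) = (b+c+2) * ((b+c+1) * (b+c)!) := by
    rw [show b+c+2 = (b+c+1)+1 from rfl, Nat.factorial_succ,
        show b+c+1 = (b+c)+1 from rfl, Nat.factorial_succ]; push_cast; ring
  have f3 : ((b+c+1)! : ℚ) = (b+c+1) * (b+c)! := by
    rw [show b+c+1 = (b+c)+1 from rfl, Nat.factorial_succ]; push_cast; ring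
  have f4 : ((b+1)! : ℚ) = (b+1) * b ! := by
    rw [Nat.factorial_succ]; push_cast; ring
  have f5 : ((c+1)! : ℚ) = (c+1) * c ! := by
    rw [Nat.factorial_succ]; push_cast; ring
  rw [f1, f2, f3, f4, f5]
  have hb : (b ! : ℚ) ≠ 0 := by exact_mod_cast (Nat.factorial_pos b).ne'
  have hc : (c ! : ℚ) ≠ 0 := by exact_mod_cast (Nat.factorial_pos c).ne'
  have hbc : ((b+c)! : ℚ) ≠ 0 := by exact_mod_cast (Nat.factorial_pos (b+c)).ne'
  have h2 : (((2*b+1))! : ℚ) ≠ 0 := by exact_mod_cast (Nat.factorial_pos (2*b+1)).ne'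
  have h3 : ((2*b+c+2)! : ℚ) ≠ 0 := by exact_mod_cast (Nat.factorial_pos (2*b+c+2)).ne'
  have p1 : ((b:ℚ)+c+1) ≠ 0 := by positivity
  have p2 : ((b:ℚ)+c+2) ≠ 0 := by positivity
  have p3 : ((b:ℚ)+1) ≠ 0 := by positivity
  have p4 : ((c:ℚ)+1) ≠ 0 := by positivity
  field_simp
  ring

lemma middle_case (b c : ℕ) :
    ((2*b+c+3).choose (b+1) : ℚ) * ((b+c+1).choose (c+1))
      = ((2*b+c+2).choose (b+1)) * ((b+c).choose c)
        + ((2*b+c+2).choose b) * ((b+c+1).choose (c+1))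
        + ((2*b+c+2).choose b) * ((b+c+1).choose (c+1))
        - tauDel (2*b+2) (2*b+c+3) := by
  have hodd : Odd (2*b+2 - 1) := ⟨b, by omega⟩
  rw [tauDel, if_pos hodd,
      show 2*b+2 - 1 = 2*b+1 from by omega,
      show 2*b+2 - 2 = 2*b from by omega,
      show 2*b+c+3 - 1 = 2*b+c+2 from by omega,
      show (2*b)/2 = b from by omega]
  have hτ : ((2*b+c+2).choose (2*b+1) : ℚ) * ((2*b+1).choose b) * 4
        * (((2*b+c+3 : ℕ) : ℚ) - ((2*b+2 : ℕ) : ℚ))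
        / ((2 * ((2*b+c+3 : ℕ) : ℚ) - ((2*b+2 : ℕ) : ℚ) - 2)
            * (2 * ((2*b+c+3 : ℕ) : ℚ) - ((2*b+2 : ℕ) : ℚ)))
      = ((2*b+c+2).choose (2*b+1) : ℚ) * ((2*b+1).choose b) * (c+1)
            / ((b+c+1)*(b+c+2)) := by
    rw [div_eq_div_iff]
    · push_cast; ring
    · have : (2 * ((2*b+c+3 : ℕ) : ℚ) - ((2*b+2 : ℕ) : ℚ) - 2)
            * (2 * ((2*b+c+3 : ℕ) : ℚ) - ((2*b+2 : ℕ) : ℚ))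
          = (2*(b:ℚ)+2*c+2) * (2*(b:ℚ)+2*c+4) := by push_cast; ring
      rw [this]; positivity
    · positivity
  rw [hτ, middle b c]
  ring

lemma cY_rec (k n j : ℕ) (hk : 1 < k) (hn : k < n) :
    cY k n j = cY k (n-1) j + cY (k-1) (n-1) j
      + (if j = 0 then 0 else cY (k-1) (n-1) (j-1))
      - (if k / 2 = j then tauDel k n else 0) := by
  rcases Nat.even_or_odd k with hpar | hpar
  · -- k even
    obtain ⟨m, rfl⟩ : ∃ m, k = 2*m := by obtain ⟨m, hm⟩ := hpar; exact ⟨m, by omega⟩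
    simp only [cY]
    split_ifs <;> first | (exfalso; omega) | skip
    · -- E1 : j = 0 edge
      have hj : j = 0 := by omega
      subst hj
      obtain ⟨a, ha⟩ : ∃ a, n - 2*m = a + 1 := ⟨n - 2*m - 1, by omega⟩
      obtain ⟨t, rfl⟩ : ∃ t, n = t + 2 := ⟨n - 2, by omega⟩
      rw [show t+2 - 0 - 1 = t+1 from by omega,
          show t+2 - 1 - 0 - 1 = t from by omega,
          show t+2 - 2*m = a+1 from by omega,
          show t+2 - 1 - 2*m = a from by omega,
          show t+2 - 1 - (2*m - 1) = a+1 from by omega]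
      simp only [Nat.choose_zero_right, Nat.cast_one, one_mul]
      linear_combination pascal1 t a
    · -- E2 : low pascal
      obtain ⟨a, ha⟩ : ∃ a, n - 2*m = a + 1 := ⟨n - 2*m - 1, by omega⟩
      rw [show n - 1 - j - 1 = n - j - 2 from by omega,
          show n - 1 - (j-1) - 1 = n - j - 1 from by omega,
          ha,
          show n - 1 - 2*m = a from by omega,
          show n - 1 - (2*m - 1) = a + 1 from by omega]
      linear_combination pascal2' n j a (by omega) (by omega)
    · -- E3 : middle
      obtain ⟨b, rfl⟩ : ∃ b, m = b + 1 := ⟨m - 1, by omega⟩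
      obtain ⟨c, rfl⟩ : ∃ c, n = 2*b+c+3 := ⟨n - 2*b - 3, by omega⟩
      have hj : j = b + 1 := by omega
      subst hj
      rw [show 2*(b+1) - 1 - (b+1) = b from by omega,
          show b+1-1 = b from by omega,
          show 2*b+c+3 - (b+1) - 1 = b+c+1 from by omega,
          show 2*b+c+3 - 2*(b+1) = c+1 from by omega,
          show 2*b+c+3 - 1 - (b+1) - 1 = b+c from by omega,
          show 2*b+c+3 - 1 - 2*(b+1) = c from by omega,
          show 2*b+c+3 - 1 - b - 1 = b+c+1 from by omega,
          show 2*b+c+3 - 1 - (2*(b+1) - 1) = c+1 from by omega,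
          show 2*b+c+3 - 1 = 2*b+c+2 from by omega,
          show 2*(b+1) = 2*b+2 from by omega]
      linear_combination middle_case b c
    · -- E4 : high pascal
      obtain ⟨a, ha⟩ : ∃ a, n - 2*m = a + 1 := ⟨n - 2*m - 1, by omega⟩
      rw [show n - 1 - (2*m - 1 - (j - 1)) - 1 = n - (2*m - j) - 2 from by omega,
          show n - 1 - (2*m - 1 - j) - 1 = n - (2*m - j) - 1 from by omega,
          show n - 1 - (2*m - j) - 1 = n - (2*m - j) - 2 from by omega,
          show 2*m - 1 - (j - 1) = 2*m - j from by omega,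
          show 2*m - 1 - j = 2*m - j - 1 from by omega,
          ha,
          show n - 1 - 2*m = a from by omega,
          show n - 1 - (2*m - 1) = a + 1 from by omega]
      linear_combination pascal2' n (2*m - j) a (by omega) (by omega)
    · -- E5 : j = 2m edge
      have hj : j = 2*m := by omega
      subst hj
      obtain ⟨a, ha⟩ : ∃ a, n - 2*m = a + 1 := ⟨n - 2*m - 1, by omega⟩
      obtain ⟨t, rfl⟩ : ∃ t, n = t + 2 := ⟨n - 2, by omega⟩
      rw [show 2*m - 1 - (2*m - 1) = 0 from by omega,
          show 2*m - 2*m = 0 from by omega,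
          show t+2 - 0 - 1 = t+1 from by omega,
          show t+2 - 1 - 0 - 1 = t from by omega,
          show t+2 - 2*m = a+1 from by omega,
          show t+2 - 1 - 2*m = a from by omega,
          show t+2 - 1 - (2*m - 1) = a+1 from by omega]
      simp only [Nat.choose_zero_right, Nat.cast_one, one_mul]
      linear_combination pascal1 t a
    · -- E6 : zero
      norm_num
  · -- k odd
    obtain ⟨m, rfl⟩ : ∃ m, k = 2*m+1 := by obtain ⟨m, hm⟩ := hpar; exact ⟨m, by omega⟩
    have hτ : tauDel (2*m+1) n = 0 := by
      have : ¬ Odd (2*m+1 - 1) := by simp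
      simp [tauDel, this]
    simp only [cY, hτ]
    split_ifs <;> first | (exfalso; omega) | skip
    · -- O1 : j = 0 edge
      have hj : j = 0 := by omega
      subst hj
      obtain ⟨a, ha⟩ : ∃ a, n - (2*m+1) = a + 1 := ⟨n - (2*m+1) - 1, by omega⟩
      obtain ⟨t, rfl⟩ : ∃ t, n = t + 2 := ⟨n - 2, by omega⟩
      rw [show t+2 - 0 - 1 = t+1 from by omega,
          show t+2 - 1 - 0 - 1 = t from by omega,
          show t+2 - (2*m+1) = a+1 from by omega,
          show t+2 - 1 - (2*m+1) = a from by omega,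
          show t+2 - 1 - (2*m+1 - 1) = a+1 from by omega]
      simp only [Nat.choose_zero_right, Nat.cast_one, one_mul]
      linear_combination pascal1 t a
    · -- O2 : low pascal (j = (2m+1)/2)
      obtain ⟨a, ha⟩ : ∃ a, n - (2*m+1) = a + 1 := ⟨n - (2*m+1) - 1, by omega⟩
      rw [show n - 1 - j - 1 = n - j - 2 from by omega,
          show n - 1 - (j-1) - 1 = n - j - 1 from by omega,
          ha,
          show n - 1 - (2*m+1) = a from by omega,
          show n - 1 - (2*m+1 - 1) = a + 1 from by omega]
      linear_combination pascal2' n j a (by omega) (by omega)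
    · -- O3 : low pascal
      obtain ⟨a, ha⟩ : ∃ a, n - (2*m+1) = a + 1 := ⟨n - (2*m+1) - 1, by omega⟩
      rw [show n - 1 - j - 1 = n - j - 2 from by omega,
          show n - 1 - (j-1) - 1 = n - j - 1 from by omega,
          ha,
          show n - 1 - (2*m+1) = a from by omega,
          show n - 1 - (2*m+1 - 1) = a + 1 from by omega]
      linear_combination pascal2' n j a (by omega) (by omega)
    · -- O4 : j = m+1
      have hj : j = m + 1 := by omega
      subst hj
      obtain ⟨a, ha⟩ : ∃ a, n - (2*m+1) = a + 1 := ⟨n - (2*m+1) - 1, by omega⟩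
      rw [show 2*m+1 - 1 - (m+1) = m - 1 from by omega,
          show 2*m+1 - (m+1) = m from by omega,
          show m+1-1 = m from by omega,
          ha,
          show n - 1 - (2*m+1) = a from by omega,
          show n - 1 - (2*m+1 - 1) = a + 1 from by omega,
          show n - 1 - m - 1 = n - m - 2 from by omega,
          show n - 1 - (m - 1) - 1 = n - m - 1 from by omega]
      linear_combination pascal2' n m a (by omega) (by omega)
    · -- O5 : high pascal
      obtain ⟨a, ha⟩ : ∃ a, n - (2*m+1) = a + 1 := ⟨n - (2*m+1) - 1, by omega⟩
      rw [show n - 1 - (2*m+1 - 1 - (j - 1)) - 1 = n - (2*m+1 - j) - 2 from by omega,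
          show n - 1 - (2*m+1 - 1 - j) - 1 = n - (2*m+1 - j) - 1 from by omega,
          show n - 1 - (2*m+1 - j) - 1 = n - (2*m+1 - j) - 2 from by omega,
          show 2*m+1 - 1 - (j - 1) = 2*m+1 - j from by omega,
          show 2*m+1 - 1 - j = 2*m+1 - j - 1 from by omega,
          ha,
          show n - 1 - (2*m+1) = a from by omega,
          show n - 1 - (2*m+1 - 1) = a + 1 from by omega]
      linear_combination pascal2' n (2*m+1 - j) a (by omega) (by omega)
    · -- O6 : j = 2m+1 edge
      have hj : j = 2*m+1 := by omega
      subst hj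
      obtain ⟨a, ha⟩ : ∃ a, n - (2*m+1) = a + 1 := ⟨n - (2*m+1) - 1, by omega⟩
      obtain ⟨t, rfl⟩ : ∃ t, n = t + 2 := ⟨n - 2, by omega⟩
      rw [show 2*m+1 - 1 - (2*m+1 - 1) = 0 from by omega,
          show 2*m+1 - (2*m+1) = 0 from by omega,
          show t+2 - 0 - 1 = t+1 from by omega,
          show t+2 - 1 - 0 - 1 = t from by omega,
          show t+2 - (2*m+1) = a+1 from by omega,
          show t+2 - 1 - (2*m+1) = a from by omega,
          show t+2 - 1 - (2*m+1 - 1) = a+1 from by omega]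
      simp only [Nat.choose_zero_right, Nat.cast_one, one_mul]
      linear_combination pascal1 t a
    · -- O7 : zero
      norm_num


/-- The inverse `Z`-polynomial deletion recursion for uniform matroids:
`Y_{k,n}(x) = Y_{k,n-1}(x) + (1+x)·Y_{k-1,n-1}(x) − τ_{k-1,n-1}·x^{k/2}` for `1 < k < n`. -/
theorem Yuniform_deletion_recursion (k n : ℕ) (hk : 1 < k) (hn : k < n) :
    Yuniform k n =
      Yuniform k (n - 1) + (1 + X) * Yuniform (k - 1) (n - 1)
        - C (tauDel k n) * X ^ (k / 2) := by
  apply Polynomial.ext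
  intro j
  rw [coeff_Yuniform k n (by omega) (by omega),
      Polynomial.coeff_sub, Polynomial.coeff_add,
      show (1 + X) * Yuniform (k-1) (n-1)
          = Yuniform (k-1) (n-1) + X * Yuniform (k-1) (n-1) from by ring,
      Polynomial.coeff_add,
      Polynomial.coeff_C_mul, Polynomial.coeff_X_pow,
      coeff_Yuniform k (n-1) (by omega) (by omega),
      coeff_Yuniform (k-1) (n-1) (by omega) (by omega)]
  have hX : (X * Yuniform (k-1) (n-1)).coeff j
      = if j = 0 then 0 else cY (k-1) (n-1) (j-1) := by
    rcases j with _ | j'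
    · simp [Polynomial.mul_coeff_zero]
    · rw [Polynomial.coeff_X_mul, coeff_Yuniform (k-1) (n-1) (by omega) (by omega)]
      simp
  rw [hX, mul_ite, mul_one, mul_zero,
      show (if j = k / 2 then tauDel k n else 0) = (if k / 2 = j then tauDel k n else 0)
        from by by_cases h : j = k / 2 <;> simp [h, eq_comm]]
  linear_combination cY_rec k n j hk hn
end

section
/- Let L be the lattice of flats of a finite loopless matroid M, and for flats F ≤ G let χ_{FG}(x) ∈ ℤ[x] be the characteristic polynomial of the minor M|_G / F. Then χ is a kernel in the incidence algebra over ℤ[x,x^{-1}]: Σ_{F ≤ H ≤ G} x^{rk(H)-rk(F)} χ_{FH}(x^{-1}) · χ_{HG}(x) = δ_{FG} for all F ≤ G, where δ_{FG} is 1 if F = G and 0 otherwise. -/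
open Matroid Set

namespace Matroid

variable {α : Type*}

/-- The deletion `M \ D` of a set `D` from a matroid `M`: the restriction to `M.E \ D`. -/
def delete' (M : Matroid α) (D : Set α) : Matroid α := M ↾ (M.E \ D)

/-- The contraction `M / C` of a set `C` in a matroid `M`, defined by duality. -/
def contract' (M : Matroid α) (C : Set α) : Matroid α := (M✶.delete' C)✶

/-- An element `e` is a coloop of `M` if it lies in every base. -/
def Coloop (M : Matroid α) (e : α) : Prop := ∀ ⦃B⦄, M.IsBase B → e ∈ B

/-- A matroid is loopless if every element of the ground set is independent. -/
def Loopless' (M : Matroid α) : Prop := ∀ e ∈ M.E, M.Indep {e}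

/-- The rank of a set `X` in a matroid `M`: the supremum of cardinalities of independent
subsets of `X`. -/
noncomputable def rk (M : Matroid α) (X : Set α) : ℕ :=
  sSup (Set.ncard '' {I | M.Indep I ∧ I ⊆ X})

/-- The closure of any set is a flat. -/
lemma flat_closure (M : Matroid α) (X : Set α) : M.IsFlat (M.closure X) := by
  rw [Matroid.closure_def, Set.sInter_eq_iInter]
  have : Nonempty {F // F ∈ {F | M.IsFlat F ∧ X ∩ M.E ⊆ F}} :=
    ⟨⟨M.E, M.ground_isFlat, Set.inter_subset_right⟩⟩
  exact Matroid.IsFlat.iInter fun F => F.2.1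

end Matroid

open Classical in
/-- The Möbius function of the lattice of flats of a matroid `M`. -/
noncomputable def Matroid.flatMu {α : Type*} [Fintype α] (M : Matroid α)
    (F G : {F : Set α // M.IsFlat F}) : ℤ :=
  letI : Fintype {F : Set α // M.IsFlat F} := Fintype.ofFinite _
  letI : LocallyFiniteOrder {F : Set α // M.IsFlat F} := Fintype.toLocallyFiniteOrder
  IncidenceAlgebra.mu ℤ F G

open Classical in
/-- The characteristic polynomial `χ_{FG}` of the minor `M|_G / F`, for flats `F ≤ G`:
`χ_{FG}(x) = Σ_{F ≤ H ≤ G} μ(F,H) x^{rk(G) − rk(H)}`. -/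
noncomputable def Matroid.flatChi {α : Type*} [Fintype α] (M : Matroid α)
    (F G : {F : Set α // M.IsFlat F}) : Polynomial ℤ :=
  letI : Fintype {F : Set α // M.IsFlat F} := Fintype.ofFinite _
  ∑ H ∈ Finset.univ.filter (fun H : {F : Set α // M.IsFlat F} => F ≤ H ∧ H ≤ G),
    Polynomial.C (M.flatMu F H) * Polynomial.X ^ (M.rk G.1 - M.rk H.1)

open Classical in
/-- The convolution `Σ_{F ≤ H ≤ G} x^{rk(H)−rk(F)} χ_{FH}(x⁻¹) · χ_{HG}(x)` in the
incidence algebra over `ℤ[x,x⁻¹]`. -/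
noncomputable def Matroid.chiKernelLHS {α : Type*} [Fintype α] (M : Matroid α)
    (F G : {F : Set α // M.IsFlat F}) : LaurentPolynomial ℤ :=
  letI : Fintype {F : Set α // M.IsFlat F} := Fintype.ofFinite _
  ∑ H ∈ Finset.univ.filter (fun H : {F : Set α // M.IsFlat F} => F ≤ H ∧ H ≤ G),
    LaurentPolynomial.T ((M.rk H.1 : ℤ) - (M.rk F.1 : ℤ)) *
      LaurentPolynomial.invert (Polynomial.toLaurent (M.flatChi F H)) *
      Polynomial.toLaurent (M.flatChi H G)

section Aux

open Classical

/-- Monotonicity of the rank function. -/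
lemma Matroid.rk_mono' {α : Type*} [Fintype α] (M : Matroid α) {X Y : Set α} (h : X ⊆ Y) :
    M.rk X ≤ M.rk Y := by
  unfold Matroid.rk
  apply csSup_le_csSup
  · refine ⟨Fintype.card α, ?_⟩
    rintro n ⟨I, _, rfl⟩
    simpa [Set.ncard_univ] using Set.ncard_le_ncard (Set.subset_univ I) Set.finite_univ
  · exact ⟨0, ∅, ⟨M.empty_indep, Set.empty_subset X⟩, by simp⟩
  · exact Set.image_mono fun I hI => ⟨hI.1, hI.2.trans h⟩

variable {ι : Type*} [Fintype ι] [PartialOrder ι] [LocallyFiniteOrder ι]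

private lemma filter_le_le_eq_Icc (a b : ι) :
    (Finset.univ.filter fun x => a ≤ x ∧ x ≤ b) = Finset.Icc a b := by
  ext x; simp [Finset.mem_Icc]

/-- `Σ_{K ≤ H ≤ L} μ(H, L) = δ_{KL}`. -/
private lemma sum_mu_left_delta (K L : ι) :
    (∑ H : ι, if K ≤ H ∧ H ≤ L then IncidenceAlgebra.mu ℤ H L else 0)
      = if K = L then 1 else 0 := by
  rw [← Finset.sum_filter, filter_le_le_eq_Icc, IncidenceAlgebra.sum_Icc_mu_left]

/-- `Σ_{F ≤ K ≤ G} μ(F, K) = δ_{FG}`. -/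
private lemma sum_mu_right_delta (F G : ι) :
    (∑ K : ι, if F ≤ K ∧ K ≤ G then IncidenceAlgebra.mu ℤ F K else 0)
      = if F = G then 1 else 0 := by
  rw [← Finset.sum_filter, filter_le_le_eq_Icc, IncidenceAlgebra.sum_Icc_mu_right]

set_option maxHeartbeats 1000000 in
/-- The key combinatorial identity, stated for an arbitrary finite partial order with a
monotone "rank" function. -/
private lemma kernel_calc (r : ι → ℕ) (hr : Monotone r) (F G : ι) :
    (∑ H ∈ Finset.univ.filter (fun H : ι => F ≤ H ∧ H ≤ G),
      LaurentPolynomial.T ((r H : ℤ) - (r F : ℤ)) *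
        LaurentPolynomial.invert (Polynomial.toLaurent
          (∑ K ∈ Finset.univ.filter (fun K : ι => F ≤ K ∧ K ≤ H),
            Polynomial.C (IncidenceAlgebra.mu ℤ F K) * Polynomial.X ^ (r H - r K))) *
        Polynomial.toLaurent
          (∑ L ∈ Finset.univ.filter (fun L : ι => H ≤ L ∧ L ≤ G),
            Polynomial.C (IncidenceAlgebra.mu ℤ H L) * Polynomial.X ^ (r G - r L)))
      = if F = G then (1 : LaurentPolynomial ℤ) else 0 := by
  classical
  -- Step 1: simplify the first factor (the one with `invert`).
  have step1 : ∀ H : ι, F ≤ H →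
      LaurentPolynomial.T ((r H : ℤ) - (r F : ℤ)) *
        LaurentPolynomial.invert (Polynomial.toLaurent
          (∑ K ∈ Finset.univ.filter (fun K : ι => F ≤ K ∧ K ≤ H),
            Polynomial.C (IncidenceAlgebra.mu ℤ F K) * Polynomial.X ^ (r H - r K)))
      = ∑ K : ι, if F ≤ K ∧ K ≤ H then
          LaurentPolynomial.C (IncidenceAlgebra.mu ℤ F K) *
            LaurentPolynomial.T ((r K : ℤ) - (r F : ℤ)) else 0 := by
    intro H hFH
    rw [map_sum, map_sum, Finset.mul_sum, Finset.sum_filter]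
    refine Finset.sum_congr rfl fun K _ => ?_
    split_ifs with hK
    · rw [map_mul, Polynomial.toLaurent_C, Polynomial.toLaurent_X_pow, map_mul,
        LaurentPolynomial.invert_C,
        LaurentPolynomial.invert_T, ← mul_assoc,
        mul_comm (LaurentPolynomial.T _) (LaurentPolynomial.C _), mul_assoc,
        ← LaurentPolynomial.T_add]
      congr 2
      have h1 : r K ≤ r H := hr hK.2
      rw [Nat.cast_sub h1]
      ring
    · rfl
  -- Step 2: simplify the second factor.
  have step2 : ∀ H : ι,
      Polynomial.toLaurent
          (∑ L ∈ Finset.univ.filter (fun L : ι => H ≤ L ∧ L ≤ G),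
            Polynomial.C (IncidenceAlgebra.mu ℤ H L) * Polynomial.X ^ (r G - r L))
      = ∑ L : ι, if H ≤ L ∧ L ≤ G then
          LaurentPolynomial.C (IncidenceAlgebra.mu ℤ H L) *
            LaurentPolynomial.T ((r G - r L : ℕ) : ℤ) else 0 := by
    intro H
    rw [map_sum, Finset.sum_filter]
    refine Finset.sum_congr rfl fun L _ => ?_
    split_ifs with hL
    · rw [map_mul, Polynomial.toLaurent_C, Polynomial.toLaurent_X_pow]
    · rfl
  calc
    (∑ H ∈ Finset.univ.filter (fun H : ι => F ≤ H ∧ H ≤ G),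
      LaurentPolynomial.T ((r H : ℤ) - (r F : ℤ)) *
        LaurentPolynomial.invert (Polynomial.toLaurent
          (∑ K ∈ Finset.univ.filter (fun K : ι => F ≤ K ∧ K ≤ H),
            Polynomial.C (IncidenceAlgebra.mu ℤ F K) * Polynomial.X ^ (r H - r K))) *
        Polynomial.toLaurent
          (∑ L ∈ Finset.univ.filter (fun L : ι => H ≤ L ∧ L ≤ G),
            Polynomial.C (IncidenceAlgebra.mu ℤ H L) * Polynomial.X ^ (r G - r L)))
      = ∑ H : ι, ∑ K : ι, ∑ L : ι,
          if (F ≤ H ∧ H ≤ G) ∧ (F ≤ K ∧ K ≤ H) ∧ (H ≤ L ∧ L ≤ G) then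
            (LaurentPolynomial.C (IncidenceAlgebra.mu ℤ F K) *
              LaurentPolynomial.T ((r K : ℤ) - (r F : ℤ))) *
            (LaurentPolynomial.C (IncidenceAlgebra.mu ℤ H L) *
              LaurentPolynomial.T ((r G - r L : ℕ) : ℤ)) else 0 := by
        rw [Finset.sum_filter]
        refine Finset.sum_congr rfl fun H _ => ?_
        split_ifs with hH
        · rw [step1 H hH.1, step2 H, Finset.sum_mul_sum]
          refine Finset.sum_congr rfl fun K _ => Finset.sum_congr rfl fun L _ => ?_
          simp only [ite_mul, mul_ite, zero_mul, mul_zero, ← ite_and]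
          congr 1
          simp only [eq_iff_iff]
          tauto
        · rw [eq_comm]
          refine Finset.sum_eq_zero fun K _ => Finset.sum_eq_zero fun L _ => ?_
          exact if_neg fun h : (F ≤ H ∧ H ≤ G) ∧ (F ≤ K ∧ K ≤ H) ∧ (H ≤ L ∧ L ≤ G) => hH h.1
    _ = ∑ K : ι, ∑ L : ι, ∑ H : ι,
          if (F ≤ H ∧ H ≤ G) ∧ (F ≤ K ∧ K ≤ H) ∧ (H ≤ L ∧ L ≤ G) then
            (LaurentPolynomial.C (IncidenceAlgebra.mu ℤ F K) *
              LaurentPolynomial.T ((r K : ℤ) - (r F : ℤ))) *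
            (LaurentPolynomial.C (IncidenceAlgebra.mu ℤ H L) *
              LaurentPolynomial.T ((r G - r L : ℕ) : ℤ)) else 0 := by
        rw [Finset.sum_comm]
        exact Finset.sum_congr rfl fun K _ => Finset.sum_comm
    _ = ∑ K : ι, ∑ L : ι,
          if K = L ∧ F ≤ K ∧ K ≤ G then
            LaurentPolynomial.C (IncidenceAlgebra.mu ℤ F K) *
              LaurentPolynomial.T ((r K : ℤ) - (r F : ℤ)) *
              LaurentPolynomial.T ((r G - r L : ℕ) : ℤ) else 0 := by
        refine Finset.sum_congr rfl fun K _ => Finset.sum_congr rfl fun L _ => ?_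
        by_cases hc : F ≤ K ∧ L ≤ G
        · have hiff : ∀ H : ι,
              ((F ≤ H ∧ H ≤ G) ∧ (F ≤ K ∧ K ≤ H) ∧ (H ≤ L ∧ L ≤ G)) ↔ (K ≤ H ∧ H ≤ L) :=
            fun H => ⟨fun h => ⟨h.2.1.2, h.2.2.1⟩,
              fun h => ⟨⟨hc.1.trans h.1, h.2.trans hc.2⟩, ⟨hc.1, h.1⟩, h.2, hc.2⟩⟩
          simp only [hiff]
          have hrw : ∀ H : ι,
              (if K ≤ H ∧ H ≤ L then
                (LaurentPolynomial.C (IncidenceAlgebra.mu ℤ F K) *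
                  LaurentPolynomial.T ((r K : ℤ) - (r F : ℤ))) *
                (LaurentPolynomial.C (IncidenceAlgebra.mu ℤ H L) *
                  LaurentPolynomial.T ((r G - r L : ℕ) : ℤ)) else 0)
              = (LaurentPolynomial.C (IncidenceAlgebra.mu ℤ F K) *
                  LaurentPolynomial.T ((r K : ℤ) - (r F : ℤ)) *
                  LaurentPolynomial.T ((r G - r L : ℕ) : ℤ)) *
                (if K ≤ H ∧ H ≤ L then
                  LaurentPolynomial.C (IncidenceAlgebra.mu ℤ H L) else 0) := by
            intro H
            split_ifs with h
            · ring
            · rw [mul_zero]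
          rw [Finset.sum_congr rfl fun H _ => hrw H, ← Finset.mul_sum]
          have hmu : (∑ H : ι, if K ≤ H ∧ H ≤ L then
              LaurentPolynomial.C (IncidenceAlgebra.mu ℤ H L) else 0)
              = if K = L then 1 else 0 := by
            have : (∑ H : ι, if K ≤ H ∧ H ≤ L then
                LaurentPolynomial.C (IncidenceAlgebra.mu ℤ H L) else 0)
                = LaurentPolynomial.C
                    (∑ H : ι, if K ≤ H ∧ H ≤ L then IncidenceAlgebra.mu ℤ H L else 0) := by
              rw [map_sum]
              exact Finset.sum_congr rfl fun H _ => by split_ifs <;> simp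
            rw [this, sum_mu_left_delta K L]
            split_ifs <;> simp
          rw [hmu]
          split_ifs with h1 h2 h2
          · rw [mul_one]
          · exact absurd ⟨h1, hc.1, h1 ▸ hc.2⟩ h2
          · exact absurd h2.1 h1
          · rw [mul_zero]
        · rw [eq_comm,
            if_neg fun h : K = L ∧ F ≤ K ∧ K ≤ G => hc ⟨h.2.1, h.1 ▸ h.2.2⟩, eq_comm]
          refine Finset.sum_eq_zero fun H _ => ?_
          exact if_neg
            fun h : (F ≤ H ∧ H ≤ G) ∧ (F ≤ K ∧ K ≤ H) ∧ (H ≤ L ∧ L ≤ G) =>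
              hc ⟨h.2.1.1, h.2.2.2⟩
    _ = ∑ K : ι,
          if F ≤ K ∧ K ≤ G then
            LaurentPolynomial.C (IncidenceAlgebra.mu ℤ F K) *
              LaurentPolynomial.T ((r K : ℤ) - (r F : ℤ)) *
              LaurentPolynomial.T ((r G - r K : ℕ) : ℤ) else 0 := by
        refine Finset.sum_congr rfl fun K _ => ?_
        rw [Finset.sum_eq_single K]
        · exact if_congr (by simp) rfl rfl
        · intro L _ hLK
          exact if_neg fun h : K = L ∧ F ≤ K ∧ K ≤ G => hLK h.1.symm
        · intro h
          exact absurd (Finset.mem_univ K) h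
    _ = (∑ K : ι, if F ≤ K ∧ K ≤ G then
            LaurentPolynomial.C (IncidenceAlgebra.mu ℤ F K) else 0) *
          LaurentPolynomial.T ((r G : ℤ) - (r F : ℤ)) := by
        rw [Finset.sum_mul]
        refine Finset.sum_congr rfl fun K _ => ?_
        split_ifs with h
        · rw [mul_assoc, ← LaurentPolynomial.T_add]
          congr 2
          rw [Nat.cast_sub (hr h.2)]
          ring
        · rw [zero_mul]
    _ = if F = G then 1 else 0 := by
        have : (∑ K : ι, if F ≤ K ∧ K ≤ G then
            LaurentPolynomial.C (IncidenceAlgebra.mu ℤ F K) else 0)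
            = LaurentPolynomial.C
                (∑ K : ι, if F ≤ K ∧ K ≤ G then IncidenceAlgebra.mu ℤ F K else 0) := by
          rw [map_sum]
          exact Finset.sum_congr rfl fun K _ => by split_ifs <;> simp
        rw [this, sum_mu_right_delta F G]
        split_ifs with h
        · subst h; simp [LaurentPolynomial.T_zero]
        · simp

end Aux

set_option maxHeartbeats 1000000 in
open Classical in
/-- The characteristic polynomial is a kernel in the incidence algebra of the lattice of
flats of a finite loopless matroid:
`Σ_{F ≤ H ≤ G} x^{rk(H)−rk(F)} χ_{FH}(x⁻¹) · χ_{HG}(x) = δ_{FG}`. -/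
theorem Matroid.flatChi_kernel {α : Type*} [Fintype α] (M : Matroid α)
    (hM : M.Loopless') :
    ∀ F G : {F : Set α // M.IsFlat F}, F ≤ G →
      M.chiKernelLHS F G = if F = G then 1 else 0 := by
  intro F G _
  letI : Fintype {F : Set α // M.IsFlat F} := Fintype.ofFinite _
  letI : LocallyFiniteOrder {F : Set α // M.IsFlat F} := Fintype.toLocallyFiniteOrder
  unfold Matroid.chiKernelLHS Matroid.flatChi Matroid.flatMu
  convert kernel_calc (ι := {F : Set α // M.IsFlat F}) (fun H => M.rk H.1) (fun a b h => M.rk_mono' h) F G using 7 <;> congr!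
end
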